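/- Under the heat-matrix assumptions with zero sources, for every k ≥ 2 and every index i there exist nonnegative weights w_1, …, w_N with Σ_j w_j = 1 such that LN_k(h)_i = Σ_j w_j u⁰_j; i.e., every iterated linear-neighbour value LN_2, LN_3, LN_4, … is a convex combination of the initial values (Theorem 2, linear-neighbour part). -/

import Mathlib

open Finset NormedSpace Asymptotics

/-- `aCoef M Q v i = Σ_{j≠i} M_ij v_j + Q_i`. -/
noncomputable def aCoef {N : ℕ} (M : Matrix (Fin N) (Fin N) ℝ) (Q : Fin N → ℝ)
    (v : Fin N → ℝ) (i : Fin N) : ℝ :=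
  (∑ j ∈ Finset.univ.erase i, M i j * v j) + Q i

/-- The constant-neighbour step `F_h`. -/
noncomputable def cnStep {N : ℕ} (M : Matrix (Fin N) (Fin N) ℝ) (Q u0 : Fin N → ℝ)
    (h : ℝ) (v : Fin N → ℝ) : Fin N → ℝ :=
  fun i => u0 i * Real.exp (M i i * h)
    + (aCoef M Q v i / (-(M i i))) * (1 - Real.exp (M i i * h))

/-- The `k`-stage constant-neighbour approximation `CN_k(h) = F_h^[k] u⁰`. -/
noncomputable def CN {N : ℕ} (M : Matrix (Fin N) (Fin N) ℝ) (Q u0 : Fin N → ℝ)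
    (k : ℕ) (h : ℝ) : Fin N → ℝ :=
  (cnStep M Q u0 h)^[k] u0

/-- The effective slope `s_i(v) = (a_i(v) − a_i(u⁰))/h`. -/
noncomputable def sCoef {N : ℕ} (M : Matrix (Fin N) (Fin N) ℝ) (Q u0 : Fin N → ℝ)
    (h : ℝ) (v : Fin N → ℝ) (i : Fin N) : ℝ :=
  (aCoef M Q v i - aCoef M Q u0 i) / h

/-- The linear-neighbour step `G_h`, with `τ_i = −1/M_ii`. -/
noncomputable def lnStep {N : ℕ} (M : Matrix (Fin N) (Fin N) ℝ) (Q u0 : Fin N → ℝ)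
    (h : ℝ) (v : Fin N → ℝ) : Fin N → ℝ :=
  fun i =>
    u0 i * Real.exp (M i i * h)
      + (aCoef M Q u0 i * (-(M i i)⁻¹) - sCoef M Q u0 h v i * (-(M i i)⁻¹) ^ 2)
          * (1 - Real.exp (M i i * h))
      + sCoef M Q u0 h v i * (-(M i i)⁻¹) * h

/-- The `k`-stage linear-neighbour approximation `LN_k(h) = G_h^[k−1] (CN_1(h))`, `k ≥ 2`. -/
noncomputable def LN {N : ℕ} (M : Matrix (Fin N) (Fin N) ℝ) (Q u0 : Fin N → ℝ)
    (k : ℕ) (h : ℝ) : Fin N → ℝ :=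
  (lnStep M Q u0 h)^[k - 1] (cnStep M Q u0 h u0)

/-- The exact solution `u_ex(h) = e^{hM} u⁰ + ∫₀^h e^{(h−s)M} Q ds`. -/
noncomputable def uex {N : ℕ} (M : Matrix (Fin N) (Fin N) ℝ) (Q u0 : Fin N → ℝ)
    (h : ℝ) : Fin N → ℝ :=
  (exp (h • M)).mulVec u0 + ∫ s in (0:ℝ)..h, (exp ((h - s) • M)).mulVec Q


lemma convex_aux {N : ℕ} (M : Matrix (Fin N) (Fin N) ℝ)
    (hoff : ∀ i j, j ≠ i → 0 ≤ M i j)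
    (u0 v : Fin N → ℝ) (i : Fin N)
    (hv : ∀ j, ∃ w : Fin N → ℝ, (∀ l, 0 ≤ w l) ∧ (∑ l, w l) = 1 ∧ v j = ∑ l, w l * u0 l)
    (E b c : ℝ) (hE : 0 ≤ E) (hb : 0 ≤ b) (hc : 0 ≤ c)
    (hsum1 : E + (b + c) * (∑ j ∈ Finset.univ.erase i, M i j) = 1) :
    ∃ w : Fin N → ℝ, (∀ l, 0 ≤ w l) ∧ (∑ l, w l) = 1 ∧
      u0 i * E + (∑ j ∈ Finset.univ.erase i, M i j * u0 j) * b
        + (∑ j ∈ Finset.univ.erase i, M i j * v j) * c = ∑ l, w l * u0 l := by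
  choose w hw0 hw1 hwv using hv
  refine ⟨fun l => (if l = i then E else M i l * b)
      + c * ∑ j ∈ Finset.univ.erase i, M i j * w j l, ?_, ?_, ?_⟩
  · intro l
    have h1 : (0:ℝ) ≤ if l = i then E else M i l * b := by
      split
      · exact hE
      · exact mul_nonneg (hoff i l (by assumption)) hb
    have h2 : (0:ℝ) ≤ ∑ j ∈ Finset.univ.erase i, M i j * w j l :=
      Finset.sum_nonneg fun j hj =>
        mul_nonneg (hoff i j (Finset.ne_of_mem_erase hj)) (hw0 j l)
    positivity
  · rw [Finset.sum_add_distrib]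
    have e1 : ∑ l, (if l = i then E else M i l * b)
        = E + ∑ l ∈ Finset.univ.erase i, M i l * b := by
      rw [← Finset.add_sum_erase _ _ (Finset.mem_univ i), if_pos rfl]
      congr 1
      exact Finset.sum_congr rfl fun l hl => if_neg (Finset.ne_of_mem_erase hl)
    have e2 : ∑ l, c * ∑ j ∈ Finset.univ.erase i, M i j * w j l
        = c * ∑ j ∈ Finset.univ.erase i, M i j := by
      rw [← Finset.mul_sum, Finset.sum_comm]
      congr 1
      refine Finset.sum_congr rfl fun j _ => ?_
      rw [← Finset.mul_sum, hw1 j, mul_one]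
    rw [e1, e2, ← Finset.sum_mul]
    linarith [hsum1]
  · have e1 : ∑ l, ((if l = i then E else M i l * b)
        + c * ∑ j ∈ Finset.univ.erase i, M i j * w j l) * u0 l
        = ∑ l, (if l = i then E else M i l * b) * u0 l
          + ∑ l, (c * ∑ j ∈ Finset.univ.erase i, M i j * w j l) * u0 l := by
      rw [← Finset.sum_add_distrib]
      exact Finset.sum_congr rfl fun l _ => by ring
    rw [e1]
    have e2 : ∑ l, (if l = i then E else M i l * b) * u0 l
        = E * u0 i + ∑ l ∈ Finset.univ.erase i, M i l * b * u0 l := by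
      rw [← Finset.add_sum_erase _ _ (Finset.mem_univ i), if_pos rfl]
      congr 1
      exact Finset.sum_congr rfl fun l hl => by rw [if_neg (Finset.ne_of_mem_erase hl)]
    have e3 : ∑ l, (c * ∑ j ∈ Finset.univ.erase i, M i j * w j l) * u0 l
        = c * ∑ j ∈ Finset.univ.erase i, M i j * v j := by
      have : ∀ l, (c * ∑ j ∈ Finset.univ.erase i, M i j * w j l) * u0 l
          = c * ∑ j ∈ Finset.univ.erase i, M i j * (w j l * u0 l) := by
        intro l
        rw [Finset.mul_sum, Finset.mul_sum, Finset.sum_mul]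
        exact Finset.sum_congr rfl fun j _ => by ring
      simp_rw [this]
      rw [← Finset.mul_sum, Finset.sum_comm]
      congr 1
      refine Finset.sum_congr rfl fun j _ => ?_
      rw [← Finset.mul_sum, hwv j]
    rw [e2, e3]
    have e4 : ∑ l ∈ Finset.univ.erase i, M i l * b * u0 l
        = (∑ l ∈ Finset.univ.erase i, M i l * u0 l) * b := by
      rw [Finset.sum_mul]
      exact Finset.sum_congr rfl fun l _ => by ring
    rw [e4]
    ring


/-- Theorem 2 (linear-neighbour part): under the heat-matrix assumptions with zero
sources, every iterated linear-neighbour value `LN_k(h)_i`, `k ≥ 2`, is a convex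
combination of the initial values. -/
theorem ln_iterates_convex_combination {N : ℕ} (hN : 1 ≤ N)
    (M : Matrix (Fin N) (Fin N) ℝ)
    (hoff : ∀ i j, j ≠ i → 0 ≤ M i j)
    (hrow : ∀ i, ∑ j, M i j = 0)
    (hdiag : ∀ i, M i i < 0)
    (u0 : Fin N → ℝ) (h : ℝ) (hh : 0 < h) (k : ℕ) (hk : 2 ≤ k) (i : Fin N) :
    ∃ w : Fin N → ℝ, (∀ j, 0 ≤ w j) ∧ (∑ j, w j) = 1 ∧
      LN M (0 : Fin N → ℝ) u0 k h i = ∑ j, w j * u0 j := by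
  have hh0 : h ≠ 0 := hh.ne'
  -- row sums over the erased set
  have hS : ∀ p : Fin N, ∑ j ∈ Finset.univ.erase p, M p j = -(M p p) := by
    intro p
    have h2 : M p p + ∑ j ∈ Finset.univ.erase p, M p j = ∑ j, M p j :=
      Finset.add_sum_erase _ _ (Finset.mem_univ p)
    have := hrow p
    linarith
  have key : ∀ n : ℕ, ∀ j : Fin N, ∃ w : Fin N → ℝ, (∀ l, 0 ≤ w l) ∧ (∑ l, w l) = 1 ∧
      ((lnStep M (0 : Fin N → ℝ) u0 h)^[n] (cnStep M (0 : Fin N → ℝ) u0 h u0)) j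
        = ∑ l, w l * u0 l := by
    have hu0 : ∀ j : Fin N, ∃ w : Fin N → ℝ, (∀ l, 0 ≤ w l) ∧ (∑ l, w l) = 1 ∧
        u0 j = ∑ l, w l * u0 l := by
      intro j
      refine ⟨fun l => if l = j then 1 else 0, fun l => by positivity, by simp, by simp⟩
    intro n
    induction n with
    | zero =>
      intro j
      have hd : (0:ℝ) < -(M j j) := neg_pos.mpr (hdiag j)
      have hd0 : -(M j j) ≠ 0 := hd.ne'
      have hE0 : (0:ℝ) < Real.exp (M j j * h) := Real.exp_pos _
      have hE1 : Real.exp (M j j * h) < 1 := by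
        rw [← Real.exp_zero]
        exact Real.exp_lt_exp.mpr (mul_neg_of_neg_of_pos (hdiag j) hh)
      obtain ⟨w, hw0, hw1, hwv⟩ := convex_aux M hoff u0 u0 j hu0
        (Real.exp (M j j * h)) 0 ((1 - Real.exp (M j j * h)) / (-(M j j)))
        hE0.le le_rfl (div_nonneg (by linarith) hd.le)
        (by rw [hS j]; have h5 : M j j ≠ 0 := (hdiag j).ne; field_simp; ring)
      refine ⟨w, hw0, hw1, ?_⟩
      rw [Function.iterate_zero_apply, ← hwv]
      simp only [cnStep, aCoef, Pi.zero_apply, add_zero]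
      ring
    | succ n ih =>
      intro j
      have hd : (0:ℝ) < -(M j j) := neg_pos.mpr (hdiag j)
      have hd0 : -(M j j) ≠ 0 := hd.ne'
      set d : ℝ := -(M j j) with hdef
      set E : ℝ := Real.exp (M j j * h) with hEdef
      have hE0 : (0:ℝ) < E := Real.exp_pos _
      have hE1 : E < 1 := by
        rw [hEdef, ← Real.exp_zero]
        exact Real.exp_lt_exp.mpr (mul_neg_of_neg_of_pos (hdiag j) hh)
      have hkey1 : 1 - E ≤ d * h := by
        have h1 := Real.add_one_le_exp (M j j * h)
        have : d * h = -(M j j * h) := by rw [hdef]; ring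
        rw [this]; linarith
      have hkey2 : E * (1 + d * h) ≤ 1 := by
        have h2 := Real.add_one_le_exp (d * h)
        have hinv : Real.exp (d * h) = E⁻¹ := by
          rw [hEdef, ← Real.exp_neg]; congr 1; rw [hdef]; ring
        have h3 : d * h + 1 ≤ E⁻¹ := hinv ▸ h2
        have h4 : E * (d * h + 1) ≤ E * E⁻¹ :=
          mul_le_mul_of_nonneg_left h3 hE0.le
        rw [mul_inv_cancel₀ hE0.ne'] at h4
        linarith
      set c : ℝ := d⁻¹ - d⁻¹ ^ 2 * (1 - E) / h with hcdef
      set b : ℝ := d⁻¹ * (1 - E) - c with hbdef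
      have hc : 0 ≤ c := by
        have hcalc : c = (d * h - (1 - E)) / (d ^ 2 * h) := by
          rw [hcdef]; field_simp
        rw [hcalc]
        exact div_nonneg (by linarith) (by positivity)
      have hb : 0 ≤ b := by
        have hcalc : b = (1 - E * (1 + d * h)) / (d ^ 2 * h) := by
          rw [hbdef, hcdef]; field_simp; ring
        rw [hcalc]
        exact div_nonneg (by linarith) (by positivity)
      have hsum1 : E + (b + c) * (∑ l ∈ Finset.univ.erase j, M j l) = 1 := by
        rw [hS j, ← hdef]
        have hbc : b + c = d⁻¹ * (1 - E) := by rw [hbdef]; ring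
        rw [hbc]
        field_simp
        ring
      obtain ⟨w, hw0, hw1, hwv⟩ := convex_aux M hoff u0 _ j ih E b c hE0.le hb hc hsum1
      refine ⟨w, hw0, hw1, ?_⟩
      rw [Function.iterate_succ_apply', ← hwv]
      simp only [lnStep, sCoef, aCoef, Pi.zero_apply, add_zero]
      rw [hbdef, hcdef]
      have hneg : -(M j j)⁻¹ = d⁻¹ := by rw [hdef, inv_neg]
      rw [hneg, ← hEdef]
      field_simp
      ring
  obtain ⟨w, hw0, hw1, hwv⟩ := key (k - 1) i
  exact ⟨w, hw0, hw1, hwv⟩
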